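/- arXiv:1703.04302 — 5 statements merged into one kernel-verified Lean document; each statement's English description precedes it below -/
import Mathlib

section
/- For any bi-infinite sequence B ∈ {1,2}^ℤ, if B contains the pattern 2,1,2*,1,2 (the asterisk marking position j, i.e., B_{j-2}B_{j-1}B_j B_{j+1}B_{j+2} = 2,1,2,1,2), then λ_j(B) > α_∞ + 10^{-2}, where λ_j(B) = [B_j; B_{j+1}, B_{j+2}, ...] + [0; B_{j-1}, B_{j-2}, ...]. -/
open Filter Topology

/-- Value of a finite continued fraction `[a₀; a₁, …, aₙ]` with natural-number entries
(the empty list has value 0, and a trailing `1/0 = 0` convention makes the recursion correct). -/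
noncomputable def cfList : List ℕ → ℝ
  | [] => 0
  | a :: l => (a : ℝ) + 1 / cfList l

/-- `n`-th convergent `[a 0; a 1, …, a n]` of the infinite continued fraction with entries `a`. -/
noncomputable def cfConvs (a : ℕ → ℕ) (n : ℕ) : ℝ :=
  cfList ((List.range (n + 1)).map a)

/-- `CFLim a x` : the infinite continued fraction `[a 0; a 1, a 2, …]` converges to `x`. -/
def CFLim (a : ℕ → ℕ) (x : ℝ) : Prop :=
  Tendsto (cfConvs a) atTop (nhds x)

/-- The eventually periodic sequence of partial quotients with preperiod `pre` and period `per`. -/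
def epseq (pre per : List ℕ) : ℕ → ℕ :=
  fun n => if n < pre.length then pre.getD n 0 else per.getD ((n - pre.length) % per.length) 0

/-- `IsLambda B j v` : for the bi-infinite sequence `B`,
`v = λ_j(B) = [B j; B (j+1), …] + [0; B (j-1), B (j-2), …]`. -/
def IsLambda (B : ℤ → ℕ) (j : ℤ) (v : ℝ) : Prop :=
  ∃ x y : ℝ,
    CFLim (fun n => B (j + n)) x ∧
    CFLim (fun n => if n = 0 then 0 else B (j - n)) y ∧
    v = x + y


noncomputable def cfVal : List ℕ → ℝ → ℝ
  | [], t => t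
  | a :: l, t => (a : ℝ) + 1 / cfVal l t

lemma cfVal_zero : ∀ l : List ℕ, cfVal l 0 = cfList l
  | [] => rfl
  | a :: l => by rw [cfVal, cfList, cfVal_zero l]

lemma cfVal_append : ∀ (l₁ l₂ : List ℕ) (t : ℝ), cfVal (l₁ ++ l₂) t = cfVal l₁ (cfVal l₂ t)
  | [], l₂, t => rfl
  | a :: l₁, l₂, t => by rw [List.cons_append, cfVal, cfVal, cfVal_append l₁]

lemma cfVal_nonneg : ∀ (l : List ℕ) (t : ℝ), 0 ≤ t → 0 ≤ cfVal l t
  | [], t, ht => ht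
  | a :: l, t, ht => by
    have h := cfVal_nonneg l t ht
    have h2 : (0:ℝ) ≤ 1 / cfVal l t := by positivity
    rw [cfVal]
    positivity

lemma cfVal_ge_one : ∀ (l : List ℕ), l ≠ [] → (∀ b ∈ l, 1 ≤ b) → ∀ t : ℝ, 0 ≤ t → 1 ≤ cfVal l t
  | [], h, _, _, _ => absurd rfl h
  | a :: l, _, hl, t, ht => by
    have h1 : (1:ℝ) ≤ (a:ℝ) := by
      exact_mod_cast hl a List.mem_cons_self
    have h2 : (0:ℝ) ≤ 1 / cfVal l t := by
      have := cfVal_nonneg l t ht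
      positivity
    rw [cfVal]; linarith

lemma cfList_ge_one (l : List ℕ) (h : l ≠ []) (hl : ∀ b ∈ l, 1 ≤ b) : 1 ≤ cfList l := by
  rw [← cfVal_zero]; exact cfVal_ge_one l h hl 0 le_rfl

lemma cfVal_parity : ∀ (l : List ℕ), (∀ b ∈ l.tail, 1 ≤ b) → ∀ t : ℝ, 1 ≤ t →
    (Odd l.length → cfVal l 0 ≤ cfVal l t) ∧ (Even l.length → l ≠ [] → cfVal l t ≤ cfVal l 0)
  | [], _, t, ht => by
    constructor
    · intro h; simp at h
    · intro _ h; exact absurd rfl h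
  | a :: l, hl, t, ht => by
    have hl' : ∀ b ∈ l, 1 ≤ b := hl
    have hl'' : ∀ b ∈ l.tail, 1 ≤ b := fun b hb => hl' b (List.mem_of_mem_tail hb)
    have IH := cfVal_parity l hl'' t ht
    constructor
    · intro hodd
      rcases List.eq_nil_or_concat' l with rfl | _
      · rw [cfVal, cfVal, cfVal]
        have : (0:ℝ) < 1 / t := by positivity
        norm_num; positivity
      · have hlne : l ≠ [] := by rintro rfl; simp_all
        have heven : Even l.length := by
          rcases Nat.even_or_odd l.length with h | h
          · exact h
          · exfalso
            have : Even (a :: l).length := by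
              rw [List.length_cons]; exact Odd.add_one h
            exact (Nat.not_odd_iff_even.mpr this) hodd
        have h1 : cfVal l t ≤ cfVal l 0 := IH.2 heven hlne
        have h2 : 1 ≤ cfVal l t := cfVal_ge_one l hlne hl' t (by linarith)
        have h3 : 1 / cfVal l 0 ≤ 1 / cfVal l t :=
          one_div_le_one_div_of_le (by linarith) h1
        rw [cfVal, cfVal]; linarith
    · intro heven _
      have hodd : Odd l.length := by
        rcases Nat.even_or_odd l.length with h | h
        · exfalso
          have : Odd (a :: l).length := by
            rw [List.length_cons]; exact Even.add_one h
          exact (Nat.not_even_iff_odd.mpr this) heven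
        · exact h
      have hlne : l ≠ [] := by rintro rfl; simp at hodd
      have h1 : cfVal l 0 ≤ cfVal l t := IH.1 hodd
      have h2 : 1 ≤ cfVal l 0 := cfVal_ge_one l hlne hl' 0 le_rfl
      have h3 : 1 / cfVal l t ≤ 1 / cfVal l 0 :=
        one_div_le_one_div_of_le (by linarith) h1
      rw [cfVal, cfVal]; linarith

lemma cfConvs_split (a : ℕ → ℕ) (m k : ℕ) :
    cfConvs a (m + k) =
      cfVal ((List.range (m + 1)).map a) (cfList ((List.range k).map (fun i => a (m + 1 + i)))) := by
  unfold cfConvs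
  rw [← cfVal_zero, show m + k + 1 = (m + 1) + k by ring, List.range_add, List.map_append,
    cfVal_append, List.map_map, cfVal_zero]
  rfl

lemma tail_map_range (a : ℕ → ℕ) (ha : ∀ i, 1 ≤ i → 1 ≤ a i) (m : ℕ) :
    ∀ b ∈ ((List.range (m + 1)).map a).tail, 1 ≤ b := by
  intro b hb
  have : ((List.range (m + 1)).map a).tail = (List.range m).map (fun i => a (i + 1)) := by
    rw [List.range_succ_eq_map]
    simp [List.map_map, Function.comp]
  rw [this] at hb
  obtain ⟨i, _, rfl⟩ := List.mem_map.1 hb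
  exact ha _ (Nat.le_add_left 1 i)

lemma conv_lower (a : ℕ → ℕ) (ha : ∀ i, 1 ≤ i → 1 ≤ a i) :
    ∀ n, 2 ≤ n → cfConvs a 2 ≤ cfConvs a n := by
  intro n hn
  obtain ⟨k, rfl⟩ := Nat.exists_eq_add_of_le hn
  rcases Nat.eq_zero_or_pos k with rfl | hk
  · rfl
  rw [cfConvs_split]
  set rest := (List.range k).map (fun i => a (2 + 1 + i)) with hrest
  have hrne : rest ≠ [] := by
    rw [hrest]; simp [List.range_eq_nil]; omega
  have hrent : ∀ b ∈ rest, 1 ≤ b := by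
    intro b hb; rw [hrest] at hb
    obtain ⟨i, _, rfl⟩ := List.mem_map.1 hb
    exact ha _ (by omega)
  have ht : 1 ≤ cfList rest := cfList_ge_one rest hrne hrent
  have hP := cfVal_parity ((List.range (2 + 1)).map a) (tail_map_range a ha 2) (cfList rest) ht
  have hlen : ((List.range (2 + 1)).map a).length = 3 := by simp
  have := hP.1 (by rw [hlen]; decide)
  rw [cfVal_zero] at this
  exact this

lemma conv_upper (a : ℕ → ℕ) (ha : ∀ i, 1 ≤ i → 1 ≤ a i) :
    ∀ n, 3 ≤ n → cfConvs a n ≤ cfConvs a 3 := by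
  intro n hn
  obtain ⟨k, rfl⟩ := Nat.exists_eq_add_of_le hn
  rcases Nat.eq_zero_or_pos k with rfl | hk
  · rfl
  rw [cfConvs_split]
  set rest := (List.range k).map (fun i => a (3 + 1 + i)) with hrest
  have hrne : rest ≠ [] := by
    rw [hrest]; simp [List.range_eq_nil]; omega
  have hrent : ∀ b ∈ rest, 1 ≤ b := by
    intro b hb; rw [hrest] at hb
    obtain ⟨i, _, rfl⟩ := List.mem_map.1 hb
    exact ha _ (by omega)
  have ht : 1 ≤ cfList rest := cfList_ge_one rest hrne hrent
  have hP := cfVal_parity ((List.range (3 + 1)).map a) (tail_map_range a ha 3) (cfList rest) ht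
  have hlen : ((List.range (3 + 1)).map a).length = 4 := by simp
  have hne : (List.range (3 + 1)).map a ≠ [] := by simp [List.range_eq_nil]
  have := hP.2 (by rw [hlen]; decide) hne
  rw [cfVal_zero] at this
  exact this

lemma lim_lower (a : ℕ → ℕ) (ha : ∀ i, 1 ≤ i → 1 ≤ a i) (x : ℝ) (hx : CFLim a x) :
    cfConvs a 2 ≤ x :=
  ge_of_tendsto hx (Filter.eventually_atTop.2 ⟨2, conv_lower a ha⟩)

lemma lim_upper (a : ℕ → ℕ) (ha : ∀ i, 1 ≤ i → 1 ≤ a i) (x : ℝ) (hx : CFLim a x) :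
    x ≤ cfConvs a 3 :=
  le_of_tendsto hx (Filter.eventually_atTop.2 ⟨3, conv_upper a ha⟩)

lemma cfConvs_two (a : ℕ → ℕ) : cfConvs a 2 = (a 0 : ℝ) + 1 / ((a 1 : ℝ) + 1 / ((a 2 : ℝ) + 1 / 0)) := by
  show cfList ((List.range 3).map a) = _
  simp [List.range_succ, cfList]

lemma cfConvs_three (a : ℕ → ℕ) :
    cfConvs a 3 = (a 0 : ℝ) + 1 / ((a 1 : ℝ) + 1 / ((a 2 : ℝ) + 1 / ((a 3 : ℝ) + 1 / 0))) := by
  show cfList ((List.range 4).map a) = _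
  simp [List.range_succ, cfList]

theorem stmt4 (B : ℤ → ℕ) (hB : ∀ n, B n = 1 ∨ B n = 2) (j : ℤ)
    (hpat : B (j - 2) = 2 ∧ B (j - 1) = 1 ∧ B j = 2 ∧ B (j + 1) = 1 ∧ B (j + 2) = 2)
    (v : ℝ) (hv : IsLambda B j v) (x y : ℝ)
    (hx : CFLim (epseq [] [2,1,1,2,2,2,1]) x)
    (hy : CFLim (epseq [0,1,2,2,2,1,1,2,1] [2]) y) :
    v > (x + y) + 1 / 100 := by
  obtain ⟨X, Y, hX, hY, rfl⟩ := hv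
  obtain ⟨h2m, h1m, h0, h1p, h2p⟩ := hpat
  -- bounds on the forward part X
  have haX : ∀ i, 1 ≤ i → 1 ≤ B (j + (i:ℕ)) := by
    intro i _; rcases hB (j + i) with h | h <;> omega
  have hXlow : (8:ℝ)/3 ≤ X := by
    have := lim_lower _ haX X hX
    rw [cfConvs_two] at this
    have e0 : B (j + ((0:ℕ):ℤ)) = 2 := by norm_num [h0]
    have e1 : B (j + ((1:ℕ):ℤ)) = 1 := by norm_num [h1p]
    have e2 : B (j + ((2:ℕ):ℤ)) = 2 := by norm_num [h2p]
    rw [e0, e1, e2] at this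
    norm_num at this
    linarith
  -- bounds on the backward part Y
  have haY : ∀ i, 1 ≤ i → 1 ≤ (fun n => if n = 0 then 0 else B (j - (n:ℕ))) i := by
    intro i hi
    show 1 ≤ if i = 0 then 0 else B (j - (i:ℕ))
    rw [if_neg (by omega : i ≠ 0)]
    rcases hB (j - i) with h | h <;> simp [h]
  have hYlow : (2:ℝ)/3 ≤ Y := by
    have := lim_lower _ haY Y hY
    rw [cfConvs_two] at this
    norm_num [h1m, h2m] at this
    linarith
  -- upper bound on x
  have hax : ∀ i, 1 ≤ i → 1 ≤ epseq [] [2,1,1,2,2,2,1] i := by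
    intro i _
    have h7 : i % 7 = 0 ∨ i % 7 = 1 ∨ i % 7 = 2 ∨ i % 7 = 3 ∨ i % 7 = 4 ∨ i % 7 = 5 ∨ i % 7 = 6 := by omega
    rcases h7 with h | h | h | h | h | h | h <;> simp [epseq, h]
  have hxup : x ≤ (13:ℝ)/5 := by
    have := lim_upper _ hax x hx
    rw [cfConvs_three] at this
    have e0 : epseq [] [2,1,1,2,2,2,1] 0 = 2 := by decide
    have e1 : epseq [] [2,1,1,2,2,2,1] 1 = 1 := by decide
    have e2 : epseq [] [2,1,1,2,2,2,1] 2 = 1 := by decide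
    have e3 : epseq [] [2,1,1,2,2,2,1] 3 = 2 := by decide
    rw [e0, e1, e2, e3] at this
    norm_num at this
    linarith
  -- upper bound on y
  have hay : ∀ i, 1 ≤ i → 1 ≤ epseq [0,1,2,2,2,1,1,2,1] [2] i := by
    intro i hi
    by_cases h9 : i < 9
    · interval_cases i <;> decide
    · simp only [epseq, List.length_cons, List.length_nil]
      rw [if_neg (by omega)]
      simp [Nat.mod_one]
  have hyup : y ≤ (5:ℝ)/7 := by
    have := lim_upper _ hay y hy
    rw [cfConvs_three] at this
    have e0 : epseq [0,1,2,2,2,1,1,2,1] [2] 0 = 0 := by decide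
    have e1 : epseq [0,1,2,2,2,1,1,2,1] [2] 1 = 1 := by decide
    have e2 : epseq [0,1,2,2,2,1,1,2,1] [2] 2 = 2 := by decide
    have e3 : epseq [0,1,2,2,2,1,1,2,1] [2] 3 = 2 := by decide
    rw [e0, e1, e2, e3] at this
    norm_num at this
    linarith
  linarith
end

section
/- For any bi-infinite sequence B ∈ {1,2}^ℤ, if B_{j-1} = B_j = 2 then λ_j(B) < [2;1,2,1] + [0;2,2,1] = 89/28 < α_∞ - 10^{-1}. -/
open Filter Topology

lemma cfList_cons (a : ℕ) (l : List ℕ) : cfList (a :: l) = (a : ℝ) + 1 / cfList l := rfl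

lemma cons_bound (a : ℕ) (l : List ℕ) (L U L' U' : ℝ) (hL : 0 < L)
    (h1 : L ≤ cfList l) (h2 : cfList l ≤ U)
    (e1 : L' ≤ (a : ℝ) + 1 / U) (e2 : (a : ℝ) + 1 / L ≤ U') :
    L' ≤ cfList (a :: l) ∧ cfList (a :: l) ≤ U' := by
  have hc : 0 < cfList l := lt_of_lt_of_le hL h1
  have hU : 0 < U := lt_of_lt_of_le hc h2
  rw [cfList_cons]
  constructor
  · have := one_div_le_one_div_of_le hc h2
    linarith
  · have := one_div_le_one_div_of_le hL h1
    linarith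

lemma bound1 : ∀ l : List ℕ, (∀ x ∈ l, x = 1 ∨ x = 2) → l ≠ [] →
    1 ≤ cfList l ∧ cfList l ≤ 3 := by
  intro l
  induction l with
  | nil => intro _ h; exact absurd rfl h
  | cons a l ih =>
    intro h _
    have ha : a = 1 ∨ a = 2 := h a List.mem_cons_self
    rcases l with _ | ⟨b, l'⟩
    · rcases ha with rfl | rfl <;> norm_num [cfList]
    · have hprev := ih (fun x hx => h x (List.mem_cons_of_mem a hx)) (by simp)
      have := cons_bound a (b :: l') 1 3 ((a:ℝ) + 1/3) ((a:ℝ) + 1) (by norm_num)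
        hprev.1 hprev.2 (by norm_num) (by norm_num)
      push_cast at this
      rcases ha with rfl | rfl <;> push_cast at this <;>
        exact ⟨by linarith [this.1], by linarith [this.2]⟩

lemma bound1len : ∀ l : List ℕ, (∀ x ∈ l, x = 1 ∨ x = 2) → 1 ≤ l.length →
    1 ≤ cfList l ∧ cfList l ≤ 3 := by
  intro l h hl
  exact bound1 l h (by rintro rfl; simp at hl)

lemma levelstep {L U : ℝ} {n : ℕ} (hL : 0 < L)
    (prev : ∀ l : List ℕ, (∀ x ∈ l, x = 1 ∨ x = 2) → n ≤ l.length →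
      L ≤ cfList l ∧ cfList l ≤ U) :
    ∀ l : List ℕ, (∀ x ∈ l, x = 1 ∨ x = 2) → n + 1 ≤ l.length →
      1 + 1/U ≤ cfList l ∧ cfList l ≤ 2 + 1/L := by
  intro l h hlen
  rcases l with _ | ⟨a, l'⟩
  · simp at hlen
  · have ha : a = 1 ∨ a = 2 := h a List.mem_cons_self
    have hprev := prev l' (fun x hx => h x (List.mem_cons_of_mem a hx)) (by simpa using hlen)
    have hc : 0 < cfList l' := lt_of_lt_of_le hL hprev.1
    have hU : 0 < U := lt_of_lt_of_le hc hprev.2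
    rw [cfList_cons]
    have h1 := one_div_le_one_div_of_le hc hprev.2
    have h2 := one_div_le_one_div_of_le hL hprev.1
    rcases ha with rfl | rfl <;> constructor <;> push_cast <;> linarith

lemma bound2 : ∀ l : List ℕ, (∀ x ∈ l, x = 1 ∨ x = 2) → 2 ≤ l.length →
    (4/3 : ℝ) ≤ cfList l ∧ cfList l ≤ 3 := by
  intro l h hl
  have := levelstep one_pos bound1len l h (by omega)
  norm_num at this
  exact this

lemma bound3 : ∀ l : List ℕ, (∀ x ∈ l, x = 1 ∨ x = 2) → 3 ≤ l.length →
    (4/3 : ℝ) ≤ cfList l ∧ cfList l ≤ 11/4 := by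
  intro l h hl
  have := levelstep (by norm_num : (0:ℝ) < 4/3) bound2 l h (by omega)
  norm_num at this
  exact this

lemma bound4 : ∀ l : List ℕ, (∀ x ∈ l, x = 1 ∨ x = 2) → 4 ≤ l.length →
    (15/11 : ℝ) ≤ cfList l ∧ cfList l ≤ 11/4 := by
  intro l h hl
  have := levelstep (by norm_num : (0:ℝ) < 4/3) bound3 l h (by omega)
  norm_num at this
  exact this

lemma bound5 : ∀ l : List ℕ, (∀ x ∈ l, x = 1 ∨ x = 2) → 5 ≤ l.length →
    (15/11 : ℝ) ≤ cfList l ∧ cfList l ≤ 41/15 := by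
  intro l h hl
  have := levelstep (by norm_num : (0:ℝ) < 15/11) bound4 l h (by omega)
  norm_num at this
  exact this

lemma cfConvs_eq (a : ℕ → ℕ) (N n : ℕ) (h : N ≤ n) :
    cfConvs a n = cfList ((List.range N).map a ++
      (List.range (n + 1 - N)).map (fun k => a (N + k))) := by
  unfold cfConvs
  congr 1
  have h1 : n + 1 = N + (n + 1 - N) := by omega
  conv_lhs => rw [h1]
  rw [List.range_add, List.map_append, List.map_map]
  rfl

lemma epseq_mem (pre per : List ℕ) (hper : per ≠ []) (n : ℕ) (hn : pre.length ≤ n) :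
    epseq pre per n ∈ per := by
  unfold epseq
  rw [if_neg (by omega)]
  have hl : 0 < per.length := List.length_pos_iff.2 hper
  have hlt : (n - pre.length) % per.length < per.length := Nat.mod_lt _ hl
  rw [List.getD_eq_getElem _ _ hlt]
  exact List.getElem_mem _

lemma range_map_good (f : ℕ → ℕ) (hf : ∀ k, f k = 1 ∨ f k = 2) (m : ℕ) :
    ∀ x ∈ (List.range m).map f, x = 1 ∨ x = 2 := by
  intro x hx
  simp only [List.mem_map, List.mem_range] at hx
  obtain ⟨k, -, rfl⟩ := hx
  exact hf k

theorem stmt6 (B : ℤ → ℕ) (hB : ∀ n, B n = 1 ∨ B n = 2) (j : ℤ)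
    (hj : B (j - 1) = 2 ∧ B j = 2) (v : ℝ) (hv : IsLambda B j v) (x y : ℝ)
    (hx : CFLim (epseq [] [2,1,1,2,2,2,1]) x)
    (hy : CFLim (epseq [0,1,2,2,2,1,1,2,1] [2]) y) :
    v < cfList [2,1,2,1] + cfList [0,2,2,1] ∧
    cfList [2,1,2,1] + cfList [0,2,2,1] = 89 / 28 ∧
    89 / 28 < (x + y) - 1 / 10 := by
  have heq : cfList [2,1,2,1] + cfList [0,2,2,1] = 89 / 28 := by
    norm_num [cfList]
  -- Part 1 : bound v
  obtain ⟨x0, y0, hx0, hy0, hvsum⟩ := hv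
  have hxb : x0 ≤ 41/15 := by
    apply le_of_tendsto hx0
    filter_upwards [eventually_ge_atTop 5] with n hn
    rw [cfConvs_eq _ 1 n (by omega)]
    set tl := (List.range (n + 1 - 1)).map (fun k => B (j + (1 + k : ℕ))) with htl
    have hgood : ∀ z ∈ tl, z = 1 ∨ z = 2 := range_map_good _ (fun k => hB _) _
    have hlen : 5 ≤ tl.length := by simp [htl]; omega
    have h0 := bound5 tl hgood hlen
    have hhead : (List.range 1).map (fun k : ℕ => B (j + (k : ℕ))) = [2] := by
      rw [show List.range 1 = [0] from rfl]
      simp only [List.map_cons, List.map_nil, Nat.cast_zero, add_zero, hj.2]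
    rw [hhead]
    simp only [List.cons_append, List.nil_append]
    have := cons_bound 2 tl (15/11) (41/15) 2 (41/15) (by norm_num)
      h0.1 h0.2 (by norm_num) (by norm_num)
    exact this.2
  have hyb : y0 ≤ 11/26 := by
    apply le_of_tendsto hy0
    filter_upwards [eventually_ge_atTop 5] with n hn
    rw [cfConvs_eq _ 2 n (by omega)]
    set tl := (List.range (n + 1 - 2)).map
      (fun k => if (2 + k : ℕ) = 0 then 0 else B (j - (2 + k : ℕ))) with htl
    have hgood : ∀ z ∈ tl, z = 1 ∨ z = 2 := by
      apply range_map_good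
      intro k
      rw [if_neg (by omega)]
      exact hB _
    have hlen : 4 ≤ tl.length := by simp [htl]; omega
    have h0 := bound4 tl hgood hlen
    have hhead : (List.range 2).map
        (fun n : ℕ => if n = 0 then 0 else B (j - (n : ℕ))) = [0, 2] := by
      rw [show List.range 2 = [0, 1] from rfl]
      norm_num
      exact hj.1
    rw [hhead]
    simp only [List.cons_append, List.nil_append]
    have h1 := cons_bound 2 tl (15/11) (11/4) (26/11) (41/15) (by norm_num)
      h0.1 h0.2 (by norm_num) (by norm_num)
    have h2 := cons_bound 0 (2 :: tl) (26/11) (41/15) (15/41) (11/26) (by norm_num)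
      h1.1 h1.2 (by norm_num) (by norm_num)
    exact h2.2
  have hv1 : v < 89/28 := by
    rw [hvsum]
    linarith
  -- Part 3 : lower bounds on x and y
  have hxlow : (393/152 : ℝ) ≤ x := by
    apply ge_of_tendsto hx
    filter_upwards [eventually_ge_atTop 7] with n hn
    rw [cfConvs_eq _ 7 n (by omega)]
    set tl := (List.range (n + 1 - 7)).map (fun k => epseq [] [2,1,1,2,2,2,1] (7 + k)) with htl
    have hgood : ∀ z ∈ tl, z = 1 ∨ z = 2 := by
      apply range_map_good
      intro k
      have hm := epseq_mem [] [2,1,1,2,2,2,1] (by simp) (7 + k) (by simp)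
      simp only [List.mem_cons, List.not_mem_nil, or_false] at hm
      tauto
    have hne : tl ≠ [] := by
      simp only [htl, ne_eq, List.map_eq_nil_iff, List.range_eq_nil]
      omega
    have h0 := bound1 tl hgood hne
    have hhead : (List.range 7).map (epseq [] [2,1,1,2,2,2,1]) = [2,1,1,2,2,2,1] := by
      decide
    rw [hhead]
    simp only [List.cons_append, List.nil_append]
    have h1 : (4/3 : ℝ) ≤ cfList (1 :: tl) ∧ cfList (1 :: tl) ≤ (2 : ℝ) :=
      cons_bound 1 _ (1 : ℝ) (3 : ℝ) _ _ (by norm_num) h0.1 h0.2 (by norm_num) (by norm_num)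
    have h2 : (5/2 : ℝ) ≤ cfList (2 :: (1 :: tl)) ∧ cfList (2 :: (1 :: tl)) ≤ (11/4 : ℝ) :=
      cons_bound 2 _ (4/3 : ℝ) (2 : ℝ) _ _ (by norm_num) h1.1 h1.2 (by norm_num) (by norm_num)
    have h3 : (26/11 : ℝ) ≤ cfList (2 :: (2 :: (1 :: tl))) ∧ cfList (2 :: (2 :: (1 :: tl))) ≤ (12/5 : ℝ) :=
      cons_bound 2 _ (5/2 : ℝ) (11/4 : ℝ) _ _ (by norm_num) h2.1 h2.2 (by norm_num) (by norm_num)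
    have h4 : (29/12 : ℝ) ≤ cfList (2 :: (2 :: (2 :: (1 :: tl)))) ∧ cfList (2 :: (2 :: (2 :: (1 :: tl)))) ≤ (63/26 : ℝ) :=
      cons_bound 2 _ (26/11 : ℝ) (12/5 : ℝ) _ _ (by norm_num) h3.1 h3.2 (by norm_num) (by norm_num)
    have h5 : (89/63 : ℝ) ≤ cfList (1 :: (2 :: (2 :: (2 :: (1 :: tl))))) ∧ cfList (1 :: (2 :: (2 :: (2 :: (1 :: tl))))) ≤ (41/29 : ℝ) :=
      cons_bound 1 _ (29/12 : ℝ) (63/26 : ℝ) _ _ (by norm_num) h4.1 h4.2 (by norm_num) (by norm_num)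
    have h6 : (70/41 : ℝ) ≤ cfList (1 :: (1 :: (2 :: (2 :: (2 :: (1 :: tl)))))) ∧ cfList (1 :: (1 :: (2 :: (2 :: (2 :: (1 :: tl)))))) ≤ (152/89 : ℝ) :=
      cons_bound 1 _ (89/63 : ℝ) (41/29 : ℝ) _ _ (by norm_num) h5.1 h5.2 (by norm_num) (by norm_num)
    have h7 : (393/152 : ℝ) ≤ cfList (2 :: (1 :: (1 :: (2 :: (2 :: (2 :: (1 :: tl))))))) ∧ cfList (2 :: (1 :: (1 :: (2 :: (2 :: (2 :: (1 :: tl))))))) ≤ (181/70 : ℝ) :=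
      cons_bound 2 _ (70/41 : ℝ) (152/89 : ℝ) _ _ (by norm_num) h6.1 h6.2 (by norm_num) (by norm_num)
    exact h7.1
  have hylow : (387/547 : ℝ) ≤ y := by
    apply ge_of_tendsto hy
    filter_upwards [eventually_ge_atTop 9] with n hn
    rw [cfConvs_eq _ 9 n (by omega)]
    set tl := (List.range (n + 1 - 9)).map
      (fun k => epseq [0,1,2,2,2,1,1,2,1] [2] (9 + k)) with htl
    have hgood : ∀ z ∈ tl, z = 1 ∨ z = 2 := by
      apply range_map_good
      intro k
      have hm := epseq_mem [0,1,2,2,2,1,1,2,1] [2] (by simp) (9 + k) (by simp)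
      simp only [List.mem_cons, List.not_mem_nil, or_false] at hm
      tauto
    have hne : tl ≠ [] := by
      simp only [htl, ne_eq, List.map_eq_nil_iff, List.range_eq_nil]
      omega
    have h0 := bound1 tl hgood hne
    have hhead : (List.range 9).map (epseq [0,1,2,2,2,1,1,2,1] [2])
        = [0,1,2,2,2,1,1,2,1] := by
      decide
    rw [hhead]
    simp only [List.cons_append, List.nil_append]
    have h1 : (4/3 : ℝ) ≤ cfList (1 :: tl) ∧ cfList (1 :: tl) ≤ (2 : ℝ) :=
      cons_bound 1 _ (1 : ℝ) (3 : ℝ) _ _ (by norm_num) h0.1 h0.2 (by norm_num) (by norm_num)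
    have h2 : (5/2 : ℝ) ≤ cfList (2 :: (1 :: tl)) ∧ cfList (2 :: (1 :: tl)) ≤ (11/4 : ℝ) :=
      cons_bound 2 _ (4/3 : ℝ) (2 : ℝ) _ _ (by norm_num) h1.1 h1.2 (by norm_num) (by norm_num)
    have h3 : (15/11 : ℝ) ≤ cfList (1 :: (2 :: (1 :: tl))) ∧ cfList (1 :: (2 :: (1 :: tl))) ≤ (7/5 : ℝ) :=
      cons_bound 1 _ (5/2 : ℝ) (11/4 : ℝ) _ _ (by norm_num) h2.1 h2.2 (by norm_num) (by norm_num)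
    have h4 : (12/7 : ℝ) ≤ cfList (1 :: (1 :: (2 :: (1 :: tl)))) ∧ cfList (1 :: (1 :: (2 :: (1 :: tl)))) ≤ (26/15 : ℝ) :=
      cons_bound 1 _ (15/11 : ℝ) (7/5 : ℝ) _ _ (by norm_num) h3.1 h3.2 (by norm_num) (by norm_num)
    have h5 : (67/26 : ℝ) ≤ cfList (2 :: (1 :: (1 :: (2 :: (1 :: tl))))) ∧ cfList (2 :: (1 :: (1 :: (2 :: (1 :: tl))))) ≤ (31/12 : ℝ) :=
      cons_bound 2 _ (12/7 : ℝ) (26/15 : ℝ) _ _ (by norm_num) h4.1 h4.2 (by norm_num) (by norm_num)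
    have h6 : (74/31 : ℝ) ≤ cfList (2 :: (2 :: (1 :: (1 :: (2 :: (1 :: tl)))))) ∧ cfList (2 :: (2 :: (1 :: (1 :: (2 :: (1 :: tl)))))) ≤ (160/67 : ℝ) :=
      cons_bound 2 _ (67/26 : ℝ) (31/12 : ℝ) _ _ (by norm_num) h5.1 h5.2 (by norm_num) (by norm_num)
    have h7 : (387/160 : ℝ) ≤ cfList (2 :: (2 :: (2 :: (1 :: (1 :: (2 :: (1 :: tl))))))) ∧ cfList (2 :: (2 :: (2 :: (1 :: (1 :: (2 :: (1 :: tl))))))) ≤ (179/74 : ℝ) :=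
      cons_bound 2 _ (74/31 : ℝ) (160/67 : ℝ) _ _ (by norm_num) h6.1 h6.2 (by norm_num) (by norm_num)
    have h8 : (253/179 : ℝ) ≤ cfList (1 :: (2 :: (2 :: (2 :: (1 :: (1 :: (2 :: (1 :: tl)))))))) ∧ cfList (1 :: (2 :: (2 :: (2 :: (1 :: (1 :: (2 :: (1 :: tl)))))))) ≤ (547/387 : ℝ) :=
      cons_bound 1 _ (387/160 : ℝ) (179/74 : ℝ) _ _ (by norm_num) h7.1 h7.2 (by norm_num) (by norm_num)
    have h9 : (387/547 : ℝ) ≤ cfList (0 :: (1 :: (2 :: (2 :: (2 :: (1 :: (1 :: (2 :: (1 :: tl))))))))) ∧ cfList (0 :: (1 :: (2 :: (2 :: (2 :: (1 :: (1 :: (2 :: (1 :: tl))))))))) ≤ (179/253 : ℝ) :=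
      cons_bound 0 _ (253/179 : ℝ) (547/387 : ℝ) _ _ (by norm_num) h8.1 h8.2 (by norm_num) (by norm_num)
    exact h9.1
  refine ⟨by rw [heq]; linarith, heq, by norm_num; linarith⟩
end

section
/- For any bi-infinite sequence B ∈ {1,2}^ℤ, if B_{j-2}B_{j-1}B_j B_{j+1}B_{j+2} = 1,1,2,1,1, then λ_j(B) < [2;1,1,1,2,1] + [0;1,1,1,2,1] = 36/11 < α_∞ - 10^{-2}. -/
open Filter Topology

lemma cfList_nonneg : ∀ l : List ℕ, 0 ≤ cfList l
  | [] => le_refl 0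
  | a :: l => by
      have h := cfList_nonneg l
      rw [cfList_cons]
      exact add_nonneg (Nat.cast_nonneg a) (one_div_nonneg.mpr h)

lemma bnd (a : ℕ) (l : List ℕ) (lo hi lo' hi' : ℝ) (hlo : 0 < lo)
    (hl : lo ≤ cfList l) (hh : cfList l ≤ hi)
    (e1 : lo' ≤ (a : ℝ) + 1 / hi) (e2 : (a : ℝ) + 1 / lo ≤ hi') :
    lo' ≤ cfList (a :: l) ∧ cfList (a :: l) ≤ hi' := by
  have hpos : 0 < cfList l := lt_of_lt_of_le hlo hl
  have i1 : 1 / hi ≤ 1 / cfList l := one_div_le_one_div_of_le hpos hh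
  have i2 : 1 / cfList l ≤ 1 / lo := one_div_le_one_div_of_le hlo hl
  rw [cfList_cons]
  constructor <;> linarith

lemma bnd2 (a : ℕ) (l : List ℕ) (lo hi lo' hi' : ℝ) (hlo : 0 < lo)
    (ha1 : 1 ≤ (a : ℝ)) (ha2 : (a : ℝ) ≤ 2)
    (hl : lo ≤ cfList l) (hh : cfList l ≤ hi)
    (e1 : lo' ≤ 1 + 1 / hi) (e2 : 2 + 1 / lo ≤ hi') :
    lo' ≤ cfList (a :: l) ∧ cfList (a :: l) ≤ hi' := by
  have hpos : 0 < cfList l := lt_of_lt_of_le hlo hl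
  have i1 : 1 / hi ≤ 1 / cfList l := one_div_le_one_div_of_le hpos hh
  have i2 : 1 / cfList l ≤ 1 / lo := one_div_le_one_div_of_le hlo hl
  rw [cfList_cons]
  constructor <;> linarith

lemma cast12 (a : ℕ) (ha : a = 1 ∨ a = 2) : 1 ≤ (a : ℝ) ∧ (a : ℝ) ≤ 2 := by
  rcases ha with rfl | rfl <;> norm_num

lemma mem1 : ∀ l : List ℕ, (∀ a ∈ l, a = 1 ∨ a = 2) → l ≠ [] →
    1 ≤ cfList l ∧ cfList l ≤ 3
  | [], _, hne => absurd rfl hne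
  | a :: l, h, _ => by
    obtain ⟨ha1, ha2⟩ := cast12 a (h a (by simp))
    rcases eq_or_ne l [] with rfl | hne
    · rw [cfList_cons]
      have : cfList [] = 0 := rfl
      rw [this, div_zero, add_zero]
      constructor <;> linarith
    · have ih := mem1 l (fun x hx => h x (by simp [hx])) hne
      exact bnd2 a l 1 3 1 3 (by norm_num) ha1 ha2 ih.1 ih.2 (by norm_num) (by norm_num)

lemma mem2 : ∀ l : List ℕ, (∀ a ∈ l, a = 1 ∨ a = 2) → 2 ≤ l.length →
    4/3 ≤ cfList l ∧ cfList l ≤ 3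
  | [], _, hlen => by simp at hlen
  | a :: l, h, hlen => by
    obtain ⟨ha1, ha2⟩ := cast12 a (h a (by simp))
    have hne : l ≠ [] := by
      intro h'; subst h'; simp at hlen
    have ih := mem1 l (fun x hx => h x (by simp [hx])) hne
    exact bnd2 a l 1 3 (4/3) 3 (by norm_num) ha1 ha2 ih.1 ih.2 (by norm_num) (by norm_num)

lemma mem3 : ∀ l : List ℕ, (∀ a ∈ l, a = 1 ∨ a = 2) → 3 ≤ l.length →
    4/3 ≤ cfList l ∧ cfList l ≤ 11/4
  | [], _, hlen => by simp at hlen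
  | a :: l, h, hlen => by
    obtain ⟨ha1, ha2⟩ := cast12 a (h a (by simp))
    have hlen' : 2 ≤ l.length := by simp at hlen; omega
    have ih := mem2 l (fun x hx => h x (by simp [hx])) hlen'
    exact bnd2 a l (4/3) 3 (4/3) (11/4) (by norm_num) ha1 ha2 ih.1 ih.2 (by norm_num) (by norm_num)

lemma mem4 : ∀ l : List ℕ, (∀ a ∈ l, a = 1 ∨ a = 2) → 4 ≤ l.length →
    15/11 ≤ cfList l ∧ cfList l ≤ 11/4
  | [], _, hlen => by simp at hlen
  | a :: l, h, hlen => by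
    obtain ⟨ha1, ha2⟩ := cast12 a (h a (by simp))
    have hlen' : 3 ≤ l.length := by simp at hlen; omega
    have ih := mem3 l (fun x hx => h x (by simp [hx])) hlen'
    exact bnd2 a l (4/3) (11/4) (15/11) (11/4) (by norm_num) ha1 ha2 ih.1 ih.2 (by norm_num) (by norm_num)

lemma chainA (rest : List ℕ) (hl : (15/11 : ℝ) ≤ cfList rest) (hh : cfList rest ≤ 11/4) :
    cfList (2 :: 1 :: 1 :: rest) ≤ 108/41 := by
  have h1 := bnd 1 (rest) (15/11:ℝ) (11/4:ℝ) (15/11:ℝ) (26/15:ℝ) (by norm_num) hl hh (by norm_num) (by norm_num)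
  have h2 := bnd 1 (1 :: rest) (15/11:ℝ) (26/15:ℝ) (41/26:ℝ) (26/15:ℝ) (by norm_num) h1.1 h1.2 (by norm_num) (by norm_num)
  have h3 := bnd 2 (1 :: 1 :: rest) (41/26:ℝ) (26/15:ℝ) (67/26:ℝ) (108/41:ℝ) (by norm_num) h2.1 h2.2 (by norm_num) (by norm_num)
  exact h3.2

lemma chainB (rest : List ℕ) (hl : (15/11 : ℝ) ≤ cfList rest) (hh : cfList rest ≤ 11/4) :
    cfList (0 :: 1 :: 1 :: rest) ≤ 26/41 := by
  have h1 := bnd 1 (rest) (15/11:ℝ) (11/4:ℝ) (15/11:ℝ) (26/15:ℝ) (by norm_num) hl hh (by norm_num) (by norm_num)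
  have h2 := bnd 1 (1 :: rest) (15/11:ℝ) (26/15:ℝ) (41/26:ℝ) (26/15:ℝ) (by norm_num) h1.1 h1.2 (by norm_num) (by norm_num)
  have h3 := bnd 0 (1 :: 1 :: rest) (41/26:ℝ) (26/15:ℝ) (15/26:ℝ) (26/41:ℝ) (by norm_num) h2.1 h2.2 (by norm_num) (by norm_num)
  exact h3.2

lemma chainX (rest : List ℕ) (hl : (1 : ℝ) ≤ cfList rest) (hh : cfList rest ≤ 3) :
    (1073/415 : ℝ) ≤ cfList (2 :: 1 :: 1 :: 2 :: 2 :: 2 :: 1 :: 2 :: 1 :: 1 :: rest) := by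
  have h1 := bnd 1 (rest) (1:ℝ) (3:ℝ) (4/3:ℝ) (2:ℝ) (by norm_num) hl hh (by norm_num) (by norm_num)
  have h2 := bnd 1 (1 :: rest) (4/3:ℝ) (2:ℝ) (3/2:ℝ) (7/4:ℝ) (by norm_num) h1.1 h1.2 (by norm_num) (by norm_num)
  have h3 := bnd 2 (1 :: 1 :: rest) (3/2:ℝ) (7/4:ℝ) (18/7:ℝ) (8/3:ℝ) (by norm_num) h2.1 h2.2 (by norm_num) (by norm_num)
  have h4 := bnd 1 (2 :: 1 :: 1 :: rest) (18/7:ℝ) (8/3:ℝ) (11/8:ℝ) (25/18:ℝ) (by norm_num) h3.1 h3.2 (by norm_num) (by norm_num)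
  have h5 := bnd 2 (1 :: 2 :: 1 :: 1 :: rest) (11/8:ℝ) (25/18:ℝ) (68/25:ℝ) (30/11:ℝ) (by norm_num) h4.1 h4.2 (by norm_num) (by norm_num)
  have h6 := bnd 2 (2 :: 1 :: 2 :: 1 :: 1 :: rest) (68/25:ℝ) (30/11:ℝ) (71/30:ℝ) (161/68:ℝ) (by norm_num) h5.1 h5.2 (by norm_num) (by norm_num)
  have h7 := bnd 2 (2 :: 2 :: 1 :: 2 :: 1 :: 1 :: rest) (71/30:ℝ) (161/68:ℝ) (390/161:ℝ) (172/71:ℝ) (by norm_num) h6.1 h6.2 (by norm_num) (by norm_num)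
  have h8 := bnd 1 (2 :: 2 :: 2 :: 1 :: 2 :: 1 :: 1 :: rest) (390/161:ℝ) (172/71:ℝ) (243/172:ℝ) (551/390:ℝ) (by norm_num) h7.1 h7.2 (by norm_num) (by norm_num)
  have h9 := bnd 1 (1 :: 2 :: 2 :: 2 :: 1 :: 2 :: 1 :: 1 :: rest) (243/172:ℝ) (551/390:ℝ) (941/551:ℝ) (415/243:ℝ) (by norm_num) h8.1 h8.2 (by norm_num) (by norm_num)
  have h10 := bnd 2 (1 :: 1 :: 2 :: 2 :: 2 :: 1 :: 2 :: 1 :: 1 :: rest) (941/551:ℝ) (415/243:ℝ) (1073/415:ℝ) (2433/941:ℝ) (by norm_num) h9.1 h9.2 (by norm_num) (by norm_num)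
  exact h10.1

lemma chainY (rest : List ℕ) (hl : (1 : ℝ) ≤ cfList rest) (hh : cfList rest ≤ 3) :
    (387/547 : ℝ) ≤ cfList (0 :: 1 :: 2 :: 2 :: 2 :: 1 :: 1 :: 2 :: 1 :: 2 :: rest) := by
  have h1 := bnd 2 (rest) (1:ℝ) (3:ℝ) (7/3:ℝ) (3:ℝ) (by norm_num) hl hh (by norm_num) (by norm_num)
  have h2 := bnd 1 (2 :: rest) (7/3:ℝ) (3:ℝ) (4/3:ℝ) (10/7:ℝ) (by norm_num) h1.1 h1.2 (by norm_num) (by norm_num)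
  have h3 := bnd 2 (1 :: 2 :: rest) (4/3:ℝ) (10/7:ℝ) (27/10:ℝ) (11/4:ℝ) (by norm_num) h2.1 h2.2 (by norm_num) (by norm_num)
  have h4 := bnd 1 (2 :: 1 :: 2 :: rest) (27/10:ℝ) (11/4:ℝ) (15/11:ℝ) (37/27:ℝ) (by norm_num) h3.1 h3.2 (by norm_num) (by norm_num)
  have h5 := bnd 1 (1 :: 2 :: 1 :: 2 :: rest) (15/11:ℝ) (37/27:ℝ) (64/37:ℝ) (26/15:ℝ) (by norm_num) h4.1 h4.2 (by norm_num) (by norm_num)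
  have h6 := bnd 2 (1 :: 1 :: 2 :: 1 :: 2 :: rest) (64/37:ℝ) (26/15:ℝ) (67/26:ℝ) (165/64:ℝ) (by norm_num) h5.1 h5.2 (by norm_num) (by norm_num)
  have h7 := bnd 2 (2 :: 1 :: 1 :: 2 :: 1 :: 2 :: rest) (67/26:ℝ) (165/64:ℝ) (394/165:ℝ) (160/67:ℝ) (by norm_num) h6.1 h6.2 (by norm_num) (by norm_num)
  have h8 := bnd 2 (2 :: 2 :: 1 :: 1 :: 2 :: 1 :: 2 :: rest) (394/165:ℝ) (160/67:ℝ) (387/160:ℝ) (953/394:ℝ) (by norm_num) h7.1 h7.2 (by norm_num) (by norm_num)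
  have h9 := bnd 1 (2 :: 2 :: 2 :: 1 :: 1 :: 2 :: 1 :: 2 :: rest) (387/160:ℝ) (953/394:ℝ) (1347/953:ℝ) (547/387:ℝ) (by norm_num) h8.1 h8.2 (by norm_num) (by norm_num)
  have h10 := bnd 0 (1 :: 2 :: 2 :: 2 :: 1 :: 1 :: 2 :: 1 :: 2 :: rest) (1347/953:ℝ) (547/387:ℝ) (387/547:ℝ) (953/1347:ℝ) (by norm_num) h9.1 h9.2 (by norm_num) (by norm_num)
  exact h10.1

lemma epseqX_mem (k : ℕ) :
    epseq [] [2,1,1,2,2,2,1] k = 1 ∨ epseq [] [2,1,1,2,2,2,1] k = 2 := by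
  unfold epseq
  simp only [List.length_nil, Nat.not_lt_zero, if_false, Nat.sub_zero, List.length_cons,
    List.length_nil]
  have h : k % 7 < 7 := Nat.mod_lt _ (by norm_num)
  set r := k % 7 with hr
  interval_cases r <;> simp

lemma epseqY_val (i : ℕ) : epseq [0,1,2,2,2,1,1,2,1] [2] (10 + i) = 2 := by
  unfold epseq
  rw [if_neg (by simp; omega)]
  simp [Nat.mod_one]

theorem stmt7 (B : ℤ → ℕ) (hB : ∀ n, B n = 1 ∨ B n = 2) (j : ℤ)
    (hpat : B (j - 2) = 1 ∧ B (j - 1) = 1 ∧ B j = 2 ∧ B (j + 1) = 1 ∧ B (j + 2) = 1)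
    (v : ℝ) (hv : IsLambda B j v) (x y : ℝ)
    (hx : CFLim (epseq [] [2,1,1,2,2,2,1]) x)
    (hy : CFLim (epseq [0,1,2,2,2,1,1,2,1] [2]) y) :
    v < cfList [2,1,1,1,2,1] + cfList [0,1,1,1,2,1] ∧
    cfList [2,1,1,1,2,1] + cfList [0,1,1,1,2,1] = 36 / 11 ∧
    36 / 11 < (x + y) - 1 / 100 := by
  have part2 : cfList [2,1,1,1,2,1] + cfList [0,1,1,1,2,1] = 36 / 11 := by
    norm_num [cfList]
  obtain ⟨x', y', hx', hy', rfl⟩ := hv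
  -- upper bound on x'
  have hxb : x' ≤ 108/41 := by
    have hx2 : Tendsto (cfConvs fun n : ℕ => B (j + n)) atTop (nhds x') := hx'
    apply le_of_tendsto hx2
    filter_upwards [eventually_ge_atTop 6] with n hn
    obtain ⟨m, rfl⟩ := Nat.exists_eq_add_of_le hn
    unfold cfConvs
    have hsplit : (6 + m) + 1 = 3 + (4 + m) := by omega
    rw [hsplit, List.range_add, List.map_append, List.map_map]
    have hpref : (List.range 3).map (fun n : ℕ => B (j + n)) = [2, 1, 1] := by
      have h3 : List.range 3 = [0, 1, 2] := rfl
      rw [h3]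
      simp only [List.map_cons, List.map_nil]
      have e0 : B (j + ((0 : ℕ) : ℤ)) = 2 := by simpa using hpat.2.2.1
      have e1 : B (j + ((1 : ℕ) : ℤ)) = 1 := by simpa using hpat.2.2.2.1
      have e2 : B (j + ((2 : ℕ) : ℤ)) = 1 := by simpa using hpat.2.2.2.2
      rw [e0, e1, e2]
    rw [hpref]
    set rest := (List.range (4 + m)).map ((fun n : ℕ => B (j + n)) ∘ (3 + ·)) with hrest
    have hmem : ∀ a ∈ rest, a = 1 ∨ a = 2 := by
      intro a ha
      rw [hrest] at ha
      simp only [List.mem_map, Function.comp] at ha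
      obtain ⟨i, _, rfl⟩ := ha
      exact hB _
    have hlen : 4 ≤ rest.length := by
      rw [hrest]; simp
    have hb := mem4 rest hmem hlen
    have : ([2, 1, 1] ++ rest) = 2 :: 1 :: 1 :: rest := by simp
    rw [this]
    exact chainA rest hb.1 hb.2
  -- upper bound on y'
  have hyb : y' ≤ 26/41 := by
    have hy2 : Tendsto (cfConvs fun n : ℕ => if n = 0 then 0 else B (j - n)) atTop (nhds y') := hy'
    apply le_of_tendsto hy2
    filter_upwards [eventually_ge_atTop 6] with n hn
    obtain ⟨m, rfl⟩ := Nat.exists_eq_add_of_le hn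
    unfold cfConvs
    have hsplit : (6 + m) + 1 = 3 + (4 + m) := by omega
    rw [hsplit, List.range_add, List.map_append, List.map_map]
    have hpref : (List.range 3).map (fun n : ℕ => if n = 0 then 0 else B (j - n)) = [0, 1, 1] := by
      have h3 : List.range 3 = [0, 1, 2] := rfl
      rw [h3]
      simp only [List.map_cons, List.map_nil]
      norm_num
      exact ⟨hpat.2.1, hpat.1⟩
    rw [hpref]
    set rest := (List.range (4 + m)).map ((fun n : ℕ => if n = 0 then 0 else B (j - n)) ∘ (3 + ·)) with hrest
    have hmem : ∀ a ∈ rest, a = 1 ∨ a = 2 := by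
      intro a ha
      rw [hrest] at ha
      simp only [List.mem_map, Function.comp] at ha
      obtain ⟨i, _, rfl⟩ := ha
      rw [if_neg (by omega)]
      exact hB _
    have hlen : 4 ≤ rest.length := by
      rw [hrest]; simp
    have hb := mem4 rest hmem hlen
    have : ([0, 1, 1] ++ rest) = 0 :: 1 :: 1 :: rest := by simp
    rw [this]
    exact chainB rest hb.1 hb.2
  -- lower bound on x
  have hxl : (1073/415 : ℝ) ≤ x := by
    have hx2 : Tendsto (cfConvs (epseq [] [2,1,1,2,2,2,1])) atTop (nhds x) := hx
    apply ge_of_tendsto hx2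
    filter_upwards [eventually_ge_atTop 10] with n hn
    obtain ⟨m, rfl⟩ := Nat.exists_eq_add_of_le hn
    unfold cfConvs
    have hsplit : (10 + m) + 1 = 10 + (1 + m) := by omega
    rw [hsplit, List.range_add, List.map_append, List.map_map]
    have hpref : (List.range 10).map (epseq [] [2,1,1,2,2,2,1]) =
        [2, 1, 1, 2, 2, 2, 1, 2, 1, 1] := by decide
    rw [hpref]
    set rest := (List.range (1 + m)).map ((epseq [] [2,1,1,2,2,2,1]) ∘ (10 + ·)) with hrest
    have hmem : ∀ a ∈ rest, a = 1 ∨ a = 2 := by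
      intro a ha
      rw [hrest] at ha
      simp only [List.mem_map, Function.comp] at ha
      obtain ⟨i, _, rfl⟩ := ha
      exact epseqX_mem _
    have hne : rest ≠ [] := by
      rw [hrest]
      simp [List.range_succ]
    have hb := mem1 rest hmem hne
    have : ([2, 1, 1, 2, 2, 2, 1, 2, 1, 1] ++ rest)
        = 2 :: 1 :: 1 :: 2 :: 2 :: 2 :: 1 :: 2 :: 1 :: 1 :: rest := by simp
    rw [this]
    exact chainX rest hb.1 hb.2
  -- lower bound on y
  have hyl : (387/547 : ℝ) ≤ y := by
    have hy2 : Tendsto (cfConvs (epseq [0,1,2,2,2,1,1,2,1] [2])) atTop (nhds y) := hy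
    apply ge_of_tendsto hy2
    filter_upwards [eventually_ge_atTop 10] with n hn
    obtain ⟨m, rfl⟩ := Nat.exists_eq_add_of_le hn
    unfold cfConvs
    have hsplit : (10 + m) + 1 = 10 + (1 + m) := by omega
    rw [hsplit, List.range_add, List.map_append, List.map_map]
    have hpref : (List.range 10).map (epseq [0,1,2,2,2,1,1,2,1] [2]) =
        [0, 1, 2, 2, 2, 1, 1, 2, 1, 2] := by decide
    rw [hpref]
    set rest := (List.range (1 + m)).map ((epseq [0,1,2,2,2,1,1,2,1] [2]) ∘ (10 + ·)) with hrest
    have hmem : ∀ a ∈ rest, a = 1 ∨ a = 2 := by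
      intro a ha
      rw [hrest] at ha
      simp only [List.mem_map, Function.comp] at ha
      obtain ⟨i, _, rfl⟩ := ha
      right
      exact epseqY_val i
    have hne : rest ≠ [] := by
      rw [hrest]
      simp [List.range_succ]
    have hb := mem1 rest hmem hne
    have : ([0, 1, 2, 2, 2, 1, 1, 2, 1, 2] ++ rest)
        = 0 :: 1 :: 2 :: 2 :: 2 :: 1 :: 1 :: 2 :: 1 :: 2 :: rest := by simp
    rw [this]
    exact chainY rest hb.1 hb.2
  refine ⟨?_, part2, ?_⟩
  · rw [part2]; linarith
  · linarith
end

section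
/- The finite continued fraction sum [2; 1,1,2,2,1,1,2,1] + [0; 1,2,2,2,2,1] equals 9933/3016, and 9933/3016 > α_∞ + 10^{-4} where α_∞ = [2; \overline{1,1,2,2,2,1,2}] + [0; 1,2,2,2,1,1,2,1,\overline{2}]. -/
open Filter Topology

lemma cfList_cons_bounds : ∀ (l : List ℕ) (a : ℕ), (∀ x ∈ l, 1 ≤ x) →
    (a : ℝ) ≤ cfList (a :: l) ∧ cfList (a :: l) ≤ (a : ℝ) + 1 := by
  intro l
  induction l with
  | nil => intro a _; simp [cfList]
  | cons b t ih =>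
    intro a h
    have hb : 1 ≤ b := h b (by simp)
    have ht := ih b (fun x hx => h x (by simp [hx]))
    have h1 : (1 : ℝ) ≤ cfList (b :: t) := le_trans (by exact_mod_cast hb) ht.1
    have hpos : (0:ℝ) < cfList (b :: t) := by linarith
    constructor
    · show (a:ℝ) ≤ (a:ℝ) + 1 / cfList (b :: t)
      have : 0 < 1 / cfList (b :: t) := by positivity
      linarith
    · show (a:ℝ) + 1 / cfList (b :: t) ≤ (a:ℝ) + 1
      have : 1 / cfList (b :: t) ≤ 1 := by
        rw [div_le_one hpos]; exact h1
      linarith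

lemma cfConvs_succ (a : ℕ → ℕ) (n : ℕ) :
    cfConvs a (n + 1) = (a 0 : ℝ) + 1 / cfConvs (fun k => a (k + 1)) n := by
  unfold cfConvs
  rw [List.range_succ_eq_map]
  simp only [List.map_cons, List.map_map, cfList]
  rfl

lemma cfConvs_bounds (c : ℕ → ℕ) (hc : ∀ n, 1 ≤ c (n + 1)) (n : ℕ) :
    (c 0 : ℝ) ≤ cfConvs c n ∧ cfConvs c n ≤ (c 0 : ℝ) + 1 := by
  have h : cfConvs c n = cfList (c 0 :: (List.range n).map (fun k => c (k + 1))) := by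
    unfold cfConvs
    rw [List.range_succ_eq_map]
    simp only [List.map_cons, List.map_map]
    rfl
  rw [h]
  apply cfList_cons_bounds
  intro x hx
  simp only [List.mem_map, List.mem_range] at hx
  obtain ⟨k, _, rfl⟩ := hx
  exact hc k

lemma cf_shift (c : ℕ → ℕ) (z : ℝ) (hc : ∀ n, 1 ≤ c (n + 1)) (h : CFLim c z) :
    ∃ z', CFLim (fun k => c (k + 1)) z' ∧ z = (c 0 : ℝ) + 1 / z' ∧ 1 ≤ z' ∧ z' ≤ (c 1 : ℝ) + 1 := by
  set d : ℕ → ℕ := fun k => c (k + 1) with hd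
  have hd1 : ∀ n, 1 ≤ d (n + 1) := fun n => hc (n + 1)
  have hdb := cfConvs_bounds d hd1
  have h1 : ∀ n, (1:ℝ) ≤ cfConvs d n := fun n =>
    le_trans (by exact_mod_cast hc 0) (hdb n).1
  have hpos : ∀ n, (0:ℝ) < cfConvs d n := fun n => lt_of_lt_of_le one_pos (h1 n)
  have hrec : ∀ n, cfConvs c (n + 1) = (c 0 : ℝ) + 1 / cfConvs d n := cfConvs_succ c
  have hc1 : (1:ℝ) ≤ (c 1 : ℝ) := by exact_mod_cast hc 0
  have hzlow : (c 0 : ℝ) + 1 / ((c 1 : ℝ) + 1) ≤ z := by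
    apply ge_of_tendsto (h.comp (tendsto_add_atTop_nat 1))
    apply Filter.Eventually.of_forall
    intro n
    show (c 0 : ℝ) + 1 / ((c 1 : ℝ) + 1) ≤ cfConvs c (n + 1)
    rw [hrec n]
    have h2 : cfConvs d n ≤ (c 1 : ℝ) + 1 := (hdb n).2
    have : 1 / ((c 1 : ℝ) + 1) ≤ 1 / cfConvs d n :=
      one_div_le_one_div_of_le (hpos n) h2
    linarith
  have hzne : z - (c 0 : ℝ) ≠ 0 := by
    have : (0:ℝ) < 1 / ((c 1 : ℝ) + 1) := by positivity
    intro hcon; rw [sub_eq_zero] at hcon; rw [hcon] at hzlow; linarith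
  have hzsub : Tendsto (fun n => cfConvs c (n + 1) - (c 0 : ℝ)) atTop (nhds (z - (c 0 : ℝ))) :=
    (h.comp (tendsto_add_atTop_nat 1)).sub tendsto_const_nhds
  have heq : ∀ n, cfConvs d n = (cfConvs c (n + 1) - (c 0 : ℝ))⁻¹ := by
    intro n
    rw [hrec n]
    rw [add_sub_cancel_left, one_div, inv_inv]
  have hlim : Tendsto (cfConvs d) atTop (nhds (z - (c 0 : ℝ))⁻¹) := by
    have := hzsub.inv₀ hzne
    simpa [← heq] using this
  refine ⟨(z - (c 0 : ℝ))⁻¹, hlim, ?_, ?_, ?_⟩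
  · rw [one_div, inv_inv]; ring
  · exact ge_of_tendsto hlim (Filter.Eventually.of_forall h1)
  · exact le_of_tendsto hlim (Filter.Eventually.of_forall (fun n => (hdb n).2))

lemma iv_step {z w lo hi lo' hi' a : ℝ} (h : z = a + 1 / w) (hlo : lo ≤ w) (hhi : w ≤ hi)
    (hpos : 0 < lo) (h1 : lo' ≤ a + 1 / hi) (h2 : a + 1 / lo ≤ hi') : lo' ≤ z ∧ z ≤ hi' := by
  have hw : 0 < w := lt_of_lt_of_le hpos hlo
  have hhipos : 0 < hi := lt_of_lt_of_le hw hhi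
  constructor
  · refine h1.trans ?_
    rw [h]
    have : 1 / hi ≤ 1 / w := one_div_le_one_div_of_le hw hhi
    linarith
  · refine le_trans ?_ h2
    rw [h]
    have : 1 / w ≤ 1 / lo := one_div_le_one_div_of_le hpos hlo
    linarith


lemma xbound (x : ℝ) (hq : 41*x^2 - 77*x - 75 = 0) (h2 : (2:ℝ) ≤ x) :
    x ≤ 258554652/100000000 := by nlinarith [hq, h2]

lemma wbound (w : ℝ) (hs : w*w = 2*w+1) (h1 : (1:ℝ) ≤ w) :
    (24142135:ℝ)/10000000 ≤ w ∧ w ≤ (24142136:ℝ)/10000000 := by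
  constructor <;> nlinarith [hs, h1]

set_option maxHeartbeats 1000000 in
theorem stmt9 (x y : ℝ)
    (hx : CFLim (epseq [] [2,1,1,2,2,2,1]) x)
    (hy : CFLim (epseq [0,1,2,2,2,1,1,2,1] [2]) y) :
    cfList [2,1,1,2,2,1,1,2,1] + cfList [0,1,2,2,2,2,1] = 9933 / 3016 ∧
    9933 / 3016 > (x + y) + 1 / 10000 := by
  constructor
  · norm_num [cfList]
  have ha : ∀ n, 1 ≤ epseq [] [2,1,1,2,2,2,1] n := by
    intro n
    have h : n % 7 = 0 ∨ n % 7 = 1 ∨ n % 7 = 2 ∨ n % 7 = 3 ∨ n % 7 = 4 ∨ n % 7 = 5 ∨ n % 7 = 6 := by omega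
    rcases h with h|h|h|h|h|h|h <;> simp [epseq, h]
  have hb1 : ∀ n, 1 ≤ epseq [0,1,2,2,2,1,1,2,1] [2] (n+1) := by
    intro n
    by_cases h : n + 1 < 9
    · have h8 : n < 8 := by omega
      interval_cases n <;> decide
    · simp [epseq, h, Nat.mod_one]
  have hconst : ∀ m, 9 ≤ m → epseq [0,1,2,2,2,1,1,2,1] [2] m = 2 := by
    intro m hm
    have h : ¬ m < 9 := by omega
    simp [epseq, h, Nat.mod_one]
  have hper : ∀ n, epseq [] [2,1,1,2,2,2,1] (n+7) = epseq [] [2,1,1,2,2,2,1] n := by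
    intro n; simp [epseq, Nat.add_mod_right]
  -- x chain of 7 shifts
  obtain ⟨z1, l1, e1, b1, -⟩ := cf_shift _ x (fun n => by exact ha _) hx
  obtain ⟨z2, l2, e2, b2, -⟩ := cf_shift _ z1 (fun n => by exact ha _) l1
  obtain ⟨z3, l3, e3, b3, -⟩ := cf_shift _ z2 (fun n => by exact ha _) l2
  obtain ⟨z4, l4, e4, b4, -⟩ := cf_shift _ z3 (fun n => by exact ha _) l3
  obtain ⟨z5, l5, e5, b5, -⟩ := cf_shift _ z4 (fun n => by exact ha _) l4
  obtain ⟨z6, l6, e6, b6, -⟩ := cf_shift _ z5 (fun n => by exact ha _) l5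
  obtain ⟨z7, l7, e7, b7, -⟩ := cf_shift _ z6 (fun n => by exact ha _) l6
  have e1' : x = (2:ℝ) + 1/z1 := by
    have hv : epseq [] [2,1,1,2,2,2,1] (0) = 2 := by decide
    rw [e1]; norm_num [hv]
  have e2' : z1 = (1:ℝ) + 1/z2 := by
    have hv : epseq [] [2,1,1,2,2,2,1] (0+1) = 1 := by decide
    rw [e2]; norm_num [hv]
  have e3' : z2 = (1:ℝ) + 1/z3 := by
    have hv : epseq [] [2,1,1,2,2,2,1] (0+1+1) = 1 := by decide
    rw [e3]; norm_num [hv]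
  have e4' : z3 = (2:ℝ) + 1/z4 := by
    have hv : epseq [] [2,1,1,2,2,2,1] (0+1+1+1) = 2 := by decide
    rw [e4]; norm_num [hv]
  have e5' : z4 = (2:ℝ) + 1/z5 := by
    have hv : epseq [] [2,1,1,2,2,2,1] (0+1+1+1+1) = 2 := by decide
    rw [e5]; norm_num [hv]
  have e6' : z5 = (2:ℝ) + 1/z6 := by
    have hv : epseq [] [2,1,1,2,2,2,1] (0+1+1+1+1+1) = 2 := by decide
    rw [e6]; norm_num [hv]
  have e7' : z6 = (1:ℝ) + 1/z7 := by
    have hv : epseq [] [2,1,1,2,2,2,1] (0+1+1+1+1+1+1) = 1 := by decide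
    rw [e7]; norm_num [hv]
  have l7' : CFLim (fun k => epseq [] [2,1,1,2,2,2,1] (k+1+1+1+1+1+1+1)) z7 := l7
  have hfun : (fun k => epseq [] [2,1,1,2,2,2,1] (k+1+1+1+1+1+1+1)) = epseq [] [2,1,1,2,2,2,1] := by
    funext n
    rw [show n+1+1+1+1+1+1+1 = n+7 by omega]
    exact hper n
  rw [hfun] at l7'
  have hz7x : z7 = x := tendsto_nhds_unique l7' hx
  have hq1 : x * z1 = 2*z1 + 1 := by
    have hne : z1 ≠ 0 := by intro hc; rw [hc] at b1; norm_num at b1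
    rw [e1']; field_simp
  have hq2 : z1 * z2 = 1*z2 + 1 := by
    have hne : z2 ≠ 0 := by intro hc; rw [hc] at b2; norm_num at b2
    rw [e2']; field_simp
  have hq3 : z2 * z3 = 1*z3 + 1 := by
    have hne : z3 ≠ 0 := by intro hc; rw [hc] at b3; norm_num at b3
    rw [e3']; field_simp
  have hq4 : z3 * z4 = 2*z4 + 1 := by
    have hne : z4 ≠ 0 := by intro hc; rw [hc] at b4; norm_num at b4
    rw [e4']; field_simp
  have hq5 : z4 * z5 = 2*z5 + 1 := by
    have hne : z5 ≠ 0 := by intro hc; rw [hc] at b5; norm_num at b5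
    rw [e5']; field_simp
  have hq6 : z5 * z6 = 2*z6 + 1 := by
    have hne : z6 ≠ 0 := by intro hc; rw [hc] at b6; norm_num at b6
    rw [e6']; field_simp
  have hq7 : z6 * z7 = 1*z7 + 1 := by
    have hne : z7 ≠ 0 := by intro hc; rw [hc] at b7; norm_num at b7
    rw [e7']; field_simp
  rw [hz7x] at hq7
  have f6 : z6 * x = x + 1 := by linear_combination hq7
  have f5 : z5 * (x+1) = 3*x+2 := by linear_combination x*hq6 - (z5-2)*f6
  have f4 : z4 * (3*x+2) = 7*x+5 := by linear_combination (x+1)*hq5 - (z4-2)*f5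
  have f3 : z3 * (7*x+5) = 17*x+12 := by linear_combination (3*x+2)*hq4 - (z3-2)*f4
  have f2 : z2 * (17*x+12) = 24*x+17 := by linear_combination (7*x+5)*hq3 - (z2-1)*f3
  have f1 : z1 * (24*x+17) = 41*x+29 := by linear_combination (17*x+12)*hq2 - (z1-1)*f2
  have hquad : 41*x^2 - 77*x - 75 = 0 := by linear_combination (24*x+17)*hq1 - (x-2)*f1
  have hx2 : (2:ℝ) ≤ x := by
    rw [e1']
    nlinarith [b1]
  have hxhi : x ≤ 258554652/100000000 := xbound x hquad hx2
  -- y chain of 10 shifts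
  obtain ⟨w1, m1, g1, c1, -⟩ := cf_shift _ y (fun n => by exact hb1 _) hy
  obtain ⟨w2, m2, g2, c2, -⟩ := cf_shift _ w1 (fun n => by exact hb1 _) m1
  obtain ⟨w3, m3, g3, c3, -⟩ := cf_shift _ w2 (fun n => by exact hb1 _) m2
  obtain ⟨w4, m4, g4, c4, -⟩ := cf_shift _ w3 (fun n => by exact hb1 _) m3
  obtain ⟨w5, m5, g5, c5, -⟩ := cf_shift _ w4 (fun n => by exact hb1 _) m4
  obtain ⟨w6, m6, g6, c6, -⟩ := cf_shift _ w5 (fun n => by exact hb1 _) m5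
  obtain ⟨w7, m7, g7, c7, -⟩ := cf_shift _ w6 (fun n => by exact hb1 _) m6
  obtain ⟨w8, m8, g8, c8, -⟩ := cf_shift _ w7 (fun n => by exact hb1 _) m7
  obtain ⟨w9, m9, g9, c9, -⟩ := cf_shift _ w8 (fun n => by exact hb1 _) m8
  obtain ⟨w10, m10, g10, c10, -⟩ := cf_shift _ w9 (fun n => by exact hb1 _) m9
  have g1' : y = (0:ℝ) + 1/w1 := by
    have hv : epseq [0,1,2,2,2,1,1,2,1] [2] (0) = 0 := by decide
    rw [g1]; norm_num [hv]
  have g2' : w1 = (1:ℝ) + 1/w2 := by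
    have hv : epseq [0,1,2,2,2,1,1,2,1] [2] (0+1) = 1 := by decide
    rw [g2]; norm_num [hv]
  have g3' : w2 = (2:ℝ) + 1/w3 := by
    have hv : epseq [0,1,2,2,2,1,1,2,1] [2] (0+1+1) = 2 := by decide
    rw [g3]; norm_num [hv]
  have g4' : w3 = (2:ℝ) + 1/w4 := by
    have hv : epseq [0,1,2,2,2,1,1,2,1] [2] (0+1+1+1) = 2 := by decide
    rw [g4]; norm_num [hv]
  have g5' : w4 = (2:ℝ) + 1/w5 := by
    have hv : epseq [0,1,2,2,2,1,1,2,1] [2] (0+1+1+1+1) = 2 := by decide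
    rw [g5]; norm_num [hv]
  have g6' : w5 = (1:ℝ) + 1/w6 := by
    have hv : epseq [0,1,2,2,2,1,1,2,1] [2] (0+1+1+1+1+1) = 1 := by decide
    rw [g6]; norm_num [hv]
  have g7' : w6 = (1:ℝ) + 1/w7 := by
    have hv : epseq [0,1,2,2,2,1,1,2,1] [2] (0+1+1+1+1+1+1) = 1 := by decide
    rw [g7]; norm_num [hv]
  have g8' : w7 = (2:ℝ) + 1/w8 := by
    have hv : epseq [0,1,2,2,2,1,1,2,1] [2] (0+1+1+1+1+1+1+1) = 2 := by decide
    rw [g8]; norm_num [hv]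
  have g9' : w8 = (1:ℝ) + 1/w9 := by
    have hv : epseq [0,1,2,2,2,1,1,2,1] [2] (0+1+1+1+1+1+1+1+1) = 1 := by decide
    rw [g9]; norm_num [hv]
  have g10' : w9 = (2:ℝ) + 1/w10 := by
    have hv : epseq [0,1,2,2,2,1,1,2,1] [2] (0+1+1+1+1+1+1+1+1+1) = 2 := by decide
    rw [g10]; norm_num [hv]
  have m9' : CFLim (fun k => epseq [0,1,2,2,2,1,1,2,1] [2] (k+1+1+1+1+1+1+1+1+1)) w9 := m9
  have m10' : CFLim (fun k => epseq [0,1,2,2,2,1,1,2,1] [2] (k+1+1+1+1+1+1+1+1+1+1)) w10 := m10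
  have hfy : (fun k => epseq [0,1,2,2,2,1,1,2,1] [2] (k+1+1+1+1+1+1+1+1+1+1)) = (fun k => epseq [0,1,2,2,2,1,1,2,1] [2] (k+1+1+1+1+1+1+1+1+1)) := by
    funext n
    rw [hconst _ (by omega), hconst _ (by omega)]
  rw [hfy] at m10'
  have hw109 : w10 = w9 := tendsto_nhds_unique m10' m9'
  rw [hw109] at g10'
  have hs : w9 * w9 = 2*w9 + 1 := by
    have hne : w9 ≠ 0 := by intro hc; rw [hc] at c9; norm_num at c9
    have h0 : w9 * w9 = (2 + 1/w9) * w9 := by rw [← g10']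
    rw [h0]; field_simp
  obtain ⟨w9lo, w9hi⟩ := wbound w9 hs c9
  have iv9 : (282842711:ℝ)/200000000 ≤ w8 ∧ w8 ≤ (707106787:ℝ)/500000000 :=
    iv_step g9' w9lo w9hi (by norm_num) (by norm_num) (by norm_num)
  have iv8 : (108284271:ℝ)/40000000 ≤ w7 ∧ w7 ≤ (541421357:ℝ)/200000000 :=
    iv_step g8' iv9.1 iv9.2 (by norm_num) (by norm_num) (by norm_num)
  have iv7 : (1369398061:ℝ)/1000000000 ≤ w6 ∧ w6 ≤ (85587379:ℝ)/62500000 :=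
    iv_step g7' iv8.1 iv8.2 (by norm_num) (by norm_num) (by norm_num)
  have iv6 : (346049571:ℝ)/200000000 ≤ w5 ∧ w5 ≤ (865123929:ℝ)/500000000 :=
    iv_step g6' iv7.1 iv7.2 (by norm_num) (by norm_num) (by norm_num)
  have iv5 : (1288975939:ℝ)/500000000 ≤ w4 ∧ w4 ≤ (64448797:ℝ)/25000000 :=
    iv_step g5' iv6.1 iv6.2 (by norm_num) (by norm_num) (by norm_num)
  have iv4 : (477580967:ℝ)/200000000 ≤ w3 ∧ w3 ≤ (596976209:ℝ)/250000000 :=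
    iv_step g4' iv5.1 iv5.2 (by norm_num) (by norm_num) (by norm_num)
  have iv3 : (2418777157:ℝ)/1000000000 ≤ w2 ∧ w2 ≤ (1209388579:ℝ)/500000000 :=
    iv_step g3' iv4.1 iv4.2 (by norm_num) (by norm_num) (by norm_num)
  have iv2 : (28268641:ℝ)/20000000 ≤ w1 ∧ w1 ≤ (1413432051:ℝ)/1000000000 :=
    iv_step g2' iv3.1 iv3.2 (by norm_num) (by norm_num) (by norm_num)
  have iv1 : (88437219:ℝ)/125000000 ≤ y ∧ y ≤ (353748877:ℝ)/500000000 :=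
    iv_step g1' iv2.1 iv2.2 (by norm_num) (by norm_num) (by norm_num)
  have key : (258554652:ℝ)/100000000 + 353748877/500000000 + 1/10000 < 9933/3016 := by norm_num
  linarith only [hxhi, iv1.2, key]
end

section
/- Let b_∞ = [2; \overline{1,1,2,2,2,1,2}] + [0; \overline{1,2,2,2,1,1,2}] and B_∞ = [2; 1, \overline{1,2,2,2,1,2,1,1,2,1,1,2}] + [0; 1,2,2,2,1,1,2,1,2,2,2,1,1,2,1,2,2, \overline{1,2,2,2,1,2,1,1,2,1,1,2}]. Then b_∞ < B_∞, and moreover 3.2930442 < b_∞ < 3.2930443 and 3.2930444 < B_∞ < 3.2930445. -/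
open Filter Topology

/-- Applying a prefix of partial quotients to a real "tail" value. -/
noncomputable def cfApp : List ℕ → ℝ → ℝ
  | [], t => t
  | a :: p, t => (a : ℝ) + 1 / cfApp p t

lemma cfList_append (p l : List ℕ) : cfList (p ++ l) = cfApp p (cfList l) := by
  induction p with
  | nil => simp [cfApp]
  | cons a p ih => simp [cfList, cfApp, ih]

lemma cfList_tail (l : List ℕ) (hne : l ≠ []) (h : ∀ a ∈ l, a = 1 ∨ a = 2) :
    1 ≤ cfList l ∧ cfList l ≤ 3 := by
  induction l with
  | nil => exact absurd rfl hne
  | cons a rest ih =>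
    have ha := h a List.mem_cons_self
    by_cases hr : rest = []
    · subst hr
      simp only [cfList, one_div, inv_zero, add_zero]
      rcases ha with h1 | h1 <;> rw [h1] <;> norm_num
    · obtain ⟨h1, h3⟩ := ih hr (fun b hb => h b (List.mem_cons_of_mem _ hb))
      have hpos : (0:ℝ) < cfList rest := lt_of_lt_of_le one_pos h1
      have hb1 : (1:ℝ)/3 ≤ 1 / cfList rest := one_div_le_one_div_of_le hpos h3
      have hb2 : 1 / cfList rest ≤ 1 := by
        rw [div_le_one hpos]; exact h1
      show 1 ≤ (a:ℝ) + 1 / cfList rest ∧ (a:ℝ) + 1 / cfList rest ≤ 3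
      rcases ha with h1 | h1 <;> rw [h1] <;> constructor <;> push_cast <;> linarith

/-- Interval version on rationals. -/
def cfAppQ : List ℕ → ℚ × ℚ → ℚ × ℚ
  | [], I => I
  | a :: p, I => ((a : ℚ) + 1 / (cfAppQ p I).2, (a : ℚ) + 1 / (cfAppQ p I).1)

lemma cfAppQ_bounds (p : List ℕ) {t : ℝ} {I : ℚ × ℚ} (h0 : 0 < I.1)
    (hlo : (I.1 : ℝ) ≤ t) (hhi : t ≤ (I.2 : ℝ)) :
    0 < (cfAppQ p I).1 ∧ ((cfAppQ p I).1 : ℝ) ≤ cfApp p t ∧ cfApp p t ≤ ((cfAppQ p I).2 : ℝ) := by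
  induction p with
  | nil => exact ⟨h0, hlo, hhi⟩
  | cons a p ih =>
    obtain ⟨j0, j1, j2⟩ := ih
    set J := cfAppQ p I with hJ
    set s := cfApp p t with hs
    have hs0 : (0:ℝ) < s := lt_of_lt_of_le (by exact_mod_cast j0) j1
    have hJ2 : (0:ℚ) < J.2 := by
      have : (0:ℝ) < (J.2 : ℝ) := lt_of_lt_of_le hs0 j2
      exact_mod_cast this
    have hb1 : (1:ℝ) / (J.2:ℝ) ≤ 1 / s := one_div_le_one_div_of_le hs0 j2
    have hb2 : (1:ℝ) / s ≤ 1 / (J.1:ℝ) := one_div_le_one_div_of_le (by exact_mod_cast j0) j1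
    refine ⟨?_, ?_, ?_⟩
    · show (0:ℚ) < (a:ℚ) + 1 / J.2
      have : (0:ℚ) < 1 / J.2 := by positivity
      have ha : (0:ℚ) ≤ (a:ℚ) := by positivity
      linarith
    · show (((a:ℚ) + 1 / J.2 : ℚ) : ℝ) ≤ (a:ℝ) + 1 / s
      push_cast
      linarith
    · show (a:ℝ) + 1 / s ≤ (((a:ℚ) + 1 / J.1 : ℚ) : ℝ)
      push_cast
      linarith

lemma epseq_mem_s13 (pre per : List ℕ) (h : ∀ a ∈ per, a = 1 ∨ a = 2) (hne : per ≠ [])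
    {m : ℕ} (hm : pre.length ≤ m) : epseq pre per m = 1 ∨ epseq pre per m = 2 := by
  unfold epseq
  rw [if_neg (by omega)]
  have hlt : (m - pre.length) % per.length < per.length :=
    Nat.mod_lt _ (List.length_pos_iff.2 hne)
  rw [List.getD_eq_getElem _ _ hlt]
  exact h _ (List.getElem_mem hlt)

lemma conv_bounds (pre per : List ℕ) (hper : ∀ a ∈ per, a = 1 ∨ a = 2) (hne : per ≠ [])
    (N : ℕ) (hN : pre.length ≤ N) (n : ℕ) (hn : N ≤ n) :
    ((cfAppQ ((List.range N).map (epseq pre per)) (1, 3)).1 : ℝ) ≤ cfConvs (epseq pre per) n ∧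
      cfConvs (epseq pre per) n ≤ ((cfAppQ ((List.range N).map (epseq pre per)) (1, 3)).2 : ℝ) := by
  obtain ⟨k, rfl⟩ := Nat.exists_eq_add_of_le hn
  rw [cfConvs, show N + k + 1 = N + (k + 1) from by omega, List.range_add, List.map_append,
    cfList_append, List.map_map]
  have htail : 1 ≤ cfList ((List.range (k + 1)).map (epseq pre per ∘ (N + ·))) ∧
      cfList ((List.range (k + 1)).map (epseq pre per ∘ (N + ·))) ≤ 3 := by
    apply cfList_tail
    · simp
    · intro b hb
      simp only [List.mem_map, List.mem_range, Function.comp] at hb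
      obtain ⟨i, _, rfl⟩ := hb
      exact epseq_mem_s13 pre per hper hne (by omega)
  have := cfAppQ_bounds ((List.range N).map (epseq pre per)) (I := (1, 3))
    (t := cfList ((List.range (k + 1)).map (epseq pre per ∘ (N + ·))))
    (by norm_num) (by push_cast; exact_mod_cast htail.1) (by push_cast; exact_mod_cast htail.2)
  exact ⟨this.2.1, this.2.2⟩

theorem stmt13 (x₁ y₁ x₂ y₂ : ℝ)
    (hx₁ : CFLim (epseq [] [2,1,1,2,2,2,1]) x₁)
    (hy₁ : CFLim (epseq [0] [1,2,2,2,1,1,2]) y₁)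
    (hx₂ : CFLim (epseq [2,1] [1,2,2,2,1,2,1,1,2,1,1,2]) x₂)
    (hy₂ : CFLim (epseq [0,1,2,2,2,1,1,2,1,2,2,2,1,1,2,1,2,2] [1,2,2,2,1,2,1,1,2,1,1,2]) y₂) :
    x₁ + y₁ < x₂ + y₂ ∧
    (3.2930442 : ℝ) < x₁ + y₁ ∧ x₁ + y₁ < (3.2930443 : ℝ) ∧
    (3.2930444 : ℝ) < x₂ + y₂ ∧ x₂ + y₂ < (3.2930445 : ℝ) := by
  have hL1 : (List.range 30).map (epseq [] [2,1,1,2,2,2,1]) =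
      [2,1,1,2,2,2,1,2,1,1,2,2,2,1,2,1,1,2,2,2,1,2,1,1,2,2,2,1,2,1] := by decide
  have hL2 : (List.range 30).map (epseq [0] [1,2,2,2,1,1,2]) =
      [0,1,2,2,2,1,1,2,1,2,2,2,1,1,2,1,2,2,2,1,1,2,1,2,2,2,1,1,2,1] := by decide
  have hL3 : (List.range 30).map (epseq [2,1] [1,2,2,2,1,2,1,1,2,1,1,2]) =
      [2,1,1,2,2,2,1,2,1,1,2,1,1,2,1,2,2,2,1,2,1,1,2,1,1,2,1,2,2,2] := by decide
  have hL4 : (List.range 30).map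
      (epseq [0,1,2,2,2,1,1,2,1,2,2,2,1,1,2,1,2,2] [1,2,2,2,1,2,1,1,2,1,1,2]) =
      [0,1,2,2,2,1,1,2,1,2,2,2,1,1,2,1,2,2,1,2,2,2,1,2,1,1,2,1,1,2] := by decide
  have hb1 := fun n hn => conv_bounds [] [2,1,1,2,2,2,1] (by decide) (by decide) 30 (by decide) n hn
  have hb2 := fun n hn => conv_bounds [0] [1,2,2,2,1,1,2] (by decide) (by decide) 30 (by decide) n hn
  have hb3 := fun n hn => conv_bounds [2,1] [1,2,2,2,1,2,1,1,2,1,1,2] (by decide) (by decide) 30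
    (by decide) n hn
  have hb4 := fun n hn => conv_bounds [0,1,2,2,2,1,1,2,1,2,2,2,1,1,2,1,2,2]
    [1,2,2,2,1,2,1,1,2,1,1,2] (by decide) (by decide) 30 (by decide) n hn
  rw [hL1] at hb1; rw [hL2] at hb2; rw [hL3] at hb3; rw [hL4] at hb4
  have hx₁lo := ge_of_tendsto hx₁ (eventually_atTop.2 ⟨30, fun n hn => (hb1 n hn).1⟩)
  have hx₁hi := le_of_tendsto hx₁ (eventually_atTop.2 ⟨30, fun n hn => (hb1 n hn).2⟩)
  have hy₁lo := ge_of_tendsto hy₁ (eventually_atTop.2 ⟨30, fun n hn => (hb2 n hn).1⟩)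
  have hy₁hi := le_of_tendsto hy₁ (eventually_atTop.2 ⟨30, fun n hn => (hb2 n hn).2⟩)
  have hx₂lo := ge_of_tendsto hx₂ (eventually_atTop.2 ⟨30, fun n hn => (hb3 n hn).1⟩)
  have hx₂hi := le_of_tendsto hx₂ (eventually_atTop.2 ⟨30, fun n hn => (hb3 n hn).2⟩)
  have hy₂lo := ge_of_tendsto hy₂ (eventually_atTop.2 ⟨30, fun n hn => (hb4 n hn).1⟩)
  have hy₂hi := le_of_tendsto hy₂ (eventually_atTop.2 ⟨30, fun n hn => (hb4 n hn).2⟩)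
  have n1 : (3.2930442 : ℝ) <
      ((cfAppQ [2,1,1,2,2,2,1,2,1,1,2,2,2,1,2,1,1,2,2,2,1,2,1,1,2,2,2,1,2,1] (1,3)).1 : ℝ) +
      ((cfAppQ [0,1,2,2,2,1,1,2,1,2,2,2,1,1,2,1,2,2,2,1,1,2,1,2,2,2,1,1,2,1] (1,3)).1 : ℝ) := by
    rw [show ((3.2930442 : ℝ)) = ((3.2930442 : ℚ) : ℝ) from by norm_num]
    rw [← Rat.cast_add, Rat.cast_lt]
    norm_num [cfAppQ]
  have n2 : ((cfAppQ [2,1,1,2,2,2,1,2,1,1,2,2,2,1,2,1,1,2,2,2,1,2,1,1,2,2,2,1,2,1] (1,3)).2 : ℝ) +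
      ((cfAppQ [0,1,2,2,2,1,1,2,1,2,2,2,1,1,2,1,2,2,2,1,1,2,1,2,2,2,1,1,2,1] (1,3)).2 : ℝ)
      < (3.2930443 : ℝ) := by
    rw [show ((3.2930443 : ℝ)) = ((3.2930443 : ℚ) : ℝ) from by norm_num]
    rw [← Rat.cast_add, Rat.cast_lt]
    norm_num [cfAppQ]
  have n3 : (3.2930444 : ℝ) <
      ((cfAppQ [2,1,1,2,2,2,1,2,1,1,2,1,1,2,1,2,2,2,1,2,1,1,2,1,1,2,1,2,2,2] (1,3)).1 : ℝ) +
      ((cfAppQ [0,1,2,2,2,1,1,2,1,2,2,2,1,1,2,1,2,2,1,2,2,2,1,2,1,1,2,1,1,2] (1,3)).1 : ℝ) := by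
    rw [show ((3.2930444 : ℝ)) = ((3.2930444 : ℚ) : ℝ) from by norm_num]
    rw [← Rat.cast_add, Rat.cast_lt]
    norm_num [cfAppQ]
  have n4 : ((cfAppQ [2,1,1,2,2,2,1,2,1,1,2,1,1,2,1,2,2,2,1,2,1,1,2,1,1,2,1,2,2,2] (1,3)).2 : ℝ) +
      ((cfAppQ [0,1,2,2,2,1,1,2,1,2,2,2,1,1,2,1,2,2,1,2,2,2,1,2,1,1,2,1,1,2] (1,3)).2 : ℝ)
      < (3.2930445 : ℝ) := by
    rw [show ((3.2930445 : ℝ)) = ((3.2930445 : ℚ) : ℝ) from by norm_num]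
    rw [← Rat.cast_add, Rat.cast_lt]
    norm_num [cfAppQ]
  refine ⟨by linarith, by linarith, by linarith, by linarith, by linarith⟩
end
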